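/- Let s ∈ (0,1). Then: (i) u = (1 − √(1−s))/2 satisfies 1 − u = ( √((1−u)(1−s)) + √(u·s) )², i.e. −log(1−u) = r(u, s); and (ii) v = (1 + √s)/2 satisfies v = ( √((1−v)(1−s)) + √(v·s) )², i.e. −log(v) = r(s, v). -/
import Mathlib


/-- The uniform pairwise rate `r(p,q) = -2·log[√((1-p)(1-q)) + √(pq)]`. -/
noncomputable def uniRate (p q : ℝ) : ℝ :=
  -2 * Real.log (Real.sqrt ((1 - p) * (1 - q)) + Real.sqrt (p * q))

/-- **New boundary levels when doubling the number of levels.**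
For `s ∈ (0,1)`: (i) `u = (1 - √(1-s))/2` satisfies
`1 - u = (√((1-u)(1-s)) + √(u·s))²`, i.e. `-log(1-u) = r(u,s)`; and
(ii) `v = (1 + √s)/2` satisfies `v = (√((1-v)(1-s)) + √(v·s))²`, i.e. `-log v = r(s,v)`. -/
theorem doubling_boundary_levels
    (s : ℝ) (hs0 : 0 < s) (hs1 : s < 1)
    (u v : ℝ)
    (hu : u = (1 - Real.sqrt (1 - s)) / 2)
    (hv : v = (1 + Real.sqrt s) / 2) :
    ((1 - u = (Real.sqrt ((1 - u) * (1 - s)) + Real.sqrt (u * s)) ^ 2 ∧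
        -Real.log (1 - u) = uniRate u s) ∧
      (v = (Real.sqrt ((1 - v) * (1 - s)) + Real.sqrt (v * s)) ^ 2 ∧
        -Real.log v = uniRate s v)) := by
  set t := Real.sqrt (1 - s) with htdef
  set w := Real.sqrt s with hwdef
  have ht0 : 0 ≤ t := Real.sqrt_nonneg _
  have hw0 : 0 ≤ w := Real.sqrt_nonneg _
  have ht2 : t ^ 2 = 1 - s := Real.sq_sqrt (by linarith)
  have hw2 : w ^ 2 = s := Real.sq_sqrt (by linarith)
  have ht1 : t ≤ 1 := by nlinarith
  have hw1 : w ≤ 1 := by nlinarith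
  set a := Real.sqrt ((1 + t) / 2) with hadef
  have ha0 : 0 ≤ a := Real.sqrt_nonneg _
  have ha2 : a ^ 2 = (1 + t) / 2 := Real.sq_sqrt (by linarith)
  set b := Real.sqrt ((1 + w) / 2) with hbdef
  have hb0 : 0 ≤ b := Real.sqrt_nonneg _
  have hb2 : b ^ 2 = (1 + w) / 2 := Real.sq_sqrt (by linarith)
  have e1 : (1 - u) * (1 - s) = (t * a) ^ 2 := by
    rw [hu]; linear_combination (-(1 + t) / 2) * ht2 - t ^ 2 * ha2
  have e2 : u * s = ((1 - t) * a) ^ 2 := by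
    rw [hu]; linear_combination ((1 - t) / 2) * ht2 - (1 - t) ^ 2 * ha2
  have s1 : Real.sqrt ((1 - u) * (1 - s)) = t * a := by
    rw [e1, Real.sqrt_sq (by positivity)]
  have s2 : Real.sqrt (u * s) = (1 - t) * a := by
    rw [e2, Real.sqrt_sq (mul_nonneg (by linarith) ha0)]
  have hsum1 : Real.sqrt ((1 - u) * (1 - s)) + Real.sqrt (u * s) = a := by
    rw [s1, s2]; ring
  have h1u : 1 - u = a ^ 2 := by rw [hu, ha2]; ring
  have f1 : (1 - v) * (1 - s) = ((1 - w) * b) ^ 2 := by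
    rw [hv]; linear_combination ((1 - w) / 2) * hw2 - (1 - w) ^ 2 * hb2
  have f2 : v * s = (w * b) ^ 2 := by
    rw [hv]; linear_combination (-(1 + w) / 2) * hw2 - w ^ 2 * hb2
  have t1 : Real.sqrt ((1 - v) * (1 - s)) = (1 - w) * b := by
    rw [f1, Real.sqrt_sq (mul_nonneg (by linarith) hb0)]
  have t2 : Real.sqrt (v * s) = w * b := by
    rw [f2, Real.sqrt_sq (by positivity)]
  have hsum2 : Real.sqrt ((1 - v) * (1 - s)) + Real.sqrt (v * s) = b := by
    rw [t1, t2]; ring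
  have hvb : v = b ^ 2 := by rw [hv, hb2]
  refine ⟨⟨by rw [hsum1]; exact h1u, ?_⟩, ⟨by rw [hsum2]; exact hvb, ?_⟩⟩
  · rw [uniRate, hsum1, h1u, Real.log_pow]; push_cast; ring
  · rw [uniRate, mul_comm (1-s) (1-v), mul_comm s v, hsum2, hvb, Real.log_pow]; push_cast; ring
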